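/- A graph G satisfies core(G) = nucleus(G) if and only if core(G[L^c(G)]) = ∅ and corona(G) ∩ ∂_L(G) = ∅. -/

import Mathlib

open Finset

variable {V : Type*} [Fintype V] [DecidableEq V] (G : SimpleGraph V) [DecidableRel G.Adj]

/-- `N(S)`: the set of vertices adjacent to some vertex of `S`. -/
def nbhd (S : Finset V) : Finset V := S.biUnion (fun v => G.neighborFinset v)

/-- `S` is an independent set of `G`. -/
def Indep (S : Finset V) : Prop := ∀ u ∈ S, ∀ v ∈ S, ¬ G.Adj u v

/-- The difference `d_G(S) = |S| - |N(S)|`. -/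
def diffI (S : Finset V) : ℤ := (S.card : ℤ) - ((nbhd G S).card : ℤ)

/-- `S` is a maximum independent set of `G`. -/
def IsMaxIndep (S : Finset V) : Prop :=
  Indep G S ∧ ∀ T : Finset V, Indep G T → T.card ≤ S.card

/-- `I` is a critical independent set of `G`. -/
def IsCritIndep (I : Finset V) : Prop :=
  Indep G I ∧ ∀ J : Finset V, Indep G J → diffI G J ≤ diffI G I

/-- `I` is a maximum critical independent set of `G`. -/
def IsMaxCritIndep (I : Finset V) : Prop :=
  IsCritIndep G I ∧ ∀ J : Finset V, IsCritIndep G J → J.card ≤ I.card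

/-- `core(G)`: intersection of all maximum independent sets. -/
def core : Set V := {v | ∀ S : Finset V, IsMaxIndep G S → v ∈ S}

/-- `corona(G)`: union of all maximum independent sets. -/
def corona : Set V := {v | ∃ S : Finset V, IsMaxIndep G S ∧ v ∈ S}

/-- `nucleus(G)`: intersection of all maximum critical independent sets. -/
def nucleus : Set V := {v | ∀ S : Finset V, IsMaxCritIndep G S → v ∈ S}

/-- `diadem(G)`: union of all maximum critical independent sets. -/
def diadem : Set V := {v | ∃ S : Finset V, IsMaxCritIndep G S ∧ v ∈ S}

/-- `ker(G)`: intersection of all critical independent sets. -/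
def kerS : Set V := {v | ∀ S : Finset V, IsCritIndep G S → v ∈ S}

/-- A matching of `G`, given as an involution of the vertex set:
unmatched vertices are fixed points, matched vertices are sent to their partner. -/
def IsMatching (M : V → V) : Prop :=
  Function.Involutive M ∧ ∀ v, M v ≠ v → G.Adj v (M v)

/-- Twice the number of edges of the matching `M`, i.e. the number of matched vertices. -/
def matchSize (M : V → V) : ℕ := (univ.filter fun v => M v ≠ v).card

/-- `M` is a maximum matching of `G`. -/
def IsMaxMatching (M : V → V) : Prop :=
  IsMatching G M ∧ ∀ M' : V → V, IsMatching G M' → matchSize M' ≤ matchSize M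

/-- `M` is a matching of the induced subgraph `G[L]`. -/
def IsMatchingOn (L : Finset V) (M : V → V) : Prop :=
  IsMatching G M ∧ ∀ v, M v ≠ v → v ∈ L

/-- `M` is a maximum matching of the induced subgraph `G[L]`. -/
def IsMaxMatchingOn (L : Finset V) (M : V → V) : Prop :=
  IsMatchingOn G L M ∧ ∀ M' : V → V, IsMatchingOn G L M' → matchSize M' ≤ matchSize M

/-- `S` is a maximum independent set of the induced subgraph `G[L]`. -/
def IsMaxIndepOn (L : Finset V) (S : Finset V) : Prop :=
  S ⊆ L ∧ Indep G S ∧ ∀ T : Finset V, T ⊆ L → Indep G T → T.card ≤ S.card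

/-- `core` of the induced subgraph `G[L]`. -/
def coreOn (L : Finset V) : Set V := {v | ∀ S : Finset V, IsMaxIndepOn G L S → v ∈ S}

/-- `D(G[L])`: vertices of `L` missed by some maximum matching of `G[L]`. -/
def Dset (L : Finset V) : Set V := {v | v ∈ L ∧ ∃ M : V → V, IsMaxMatchingOn G L M ∧ M v = v}

/-- The Larson boundary `∂_L(G)` of the set `L`. -/
def boundaryL (L : Finset V) : Set V := {v | v ∈ L ∧ ∃ w, w ∉ L ∧ G.Adj v w}

/-- The critical difference `d(G)`. -/
noncomputable def critDiff : ℤ := sSup {d : ℤ | ∃ X : Finset V, diffI G X = d}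

/-- The difference of `S` computed in the induced subgraph `G[L]`. -/
def diffOn (L : Finset V) (S : Finset V) : ℤ := (S.card : ℤ) - ((nbhd G S ∩ L).card : ℤ)

/-- The critical difference of the induced subgraph `G[L]`. -/
noncomputable def critDiffOn (L : Finset V) : ℤ := sSup {d : ℤ | ∃ X : Finset V, X ⊆ L ∧ diffOn G L X = d}

/-- `G` is a König–Egerváry graph: `α(G) + μ(G) = |V(G)|`. -/
def KonigEgervary : Prop :=
  ∃ (S : Finset V) (M : V → V), IsMaxIndep G S ∧ IsMaxMatching G M ∧
    2 * S.card + matchSize M = 2 * Fintype.card V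

section Aux

lemma mem_nbhd {S : Finset V} {v : V} : v ∈ nbhd G S ↔ ∃ u ∈ S, G.Adj u v := by
  simp [nbhd, SimpleGraph.mem_neighborFinset]

lemma nbhd_mono {S T : Finset V} (h : S ⊆ T) : nbhd G S ⊆ nbhd G T := by
  intro x hx
  rw [mem_nbhd] at hx ⊢
  obtain ⟨u, hu, ha⟩ := hx
  exact ⟨u, h hu, ha⟩

lemma nbhd_union (S T : Finset V) : nbhd G (S ∪ T) = nbhd G S ∪ nbhd G T := by
  ext x
  simp only [mem_nbhd, Finset.mem_union]
  constructor
  · rintro ⟨u, hu | hu, ha⟩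
    exacts [Or.inl ⟨u, hu, ha⟩, Or.inr ⟨u, hu, ha⟩]
  · rintro (⟨u, hu, ha⟩ | ⟨u, hu, ha⟩)
    exacts [⟨u, Or.inl hu, ha⟩, ⟨u, Or.inr hu, ha⟩]

lemma indep_subset {S T : Finset V} (h : Indep G S) (hTS : T ⊆ S) : Indep G T :=
  fun u hu v hv => h u (hTS hu) v (hTS hv)

end Aux

theorem stmt14 (I : Finset V) (hI : IsMaxCritIndep G I) :
    core G = nucleus G ↔
      (coreOn G (univ \ (I ∪ nbhd G I)) = ∅ ∧
        corona G ∩ boundaryL G (I ∪ nbhd G I) = ∅) := by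
  classical
  set L : Finset V := I ∪ nbhd G I with hLdef
  have hIndepI : Indep G I := hI.1.1
  have hcritI : ∀ J : Finset V, Indep G J → diffI G J ≤ diffI G I := hI.1.2
  have hIN : ∀ x ∈ I, x ∉ nbhd G I := by
    intro x hx hmem
    rw [mem_nbhd] at hmem
    obtain ⟨u, hu, ha⟩ := hmem
    exact hIndepI u hu x hx ha
  have hdisjIN : Disjoint I (nbhd G I) := Finset.disjoint_left.mpr (fun {x} hx => hIN x hx)
  have hNL : nbhd G I ⊆ L := Finset.subset_union_right
  have hIL : I ⊆ L := Finset.subset_union_left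
  have hLcard : L.card = I.card + (nbhd G I).card := by
    rw [hLdef]; exact Finset.card_union_of_disjoint hdisjIN
  -- Hall's theorem: a matching from N(I) into I
  obtain ⟨F, hFinj, hFmem⟩ :
      ∃ F : {x // x ∈ nbhd G I} → V, Function.Injective F ∧
        ∀ x : {x // x ∈ nbhd G I}, F x ∈ G.neighborFinset x.1 ∩ I := by
    rw [← Finset.all_card_le_biUnion_card_iff_exists_injective]
    intro s
    set T : Finset V := s.image (fun x => x.1) with hTdef
    have hTcard : T.card = s.card := Finset.card_image_of_injective _ Subtype.val_injective
    have hTsub : T ⊆ nbhd G I := by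
      intro x hx
      rw [hTdef, Finset.mem_image] at hx
      obtain ⟨a, _, rfl⟩ := hx
      exact a.2
    have hbiU : s.biUnion (fun x => G.neighborFinset x.1 ∩ I) = nbhd G T ∩ I := by
      ext v
      simp only [Finset.mem_biUnion, Finset.mem_inter, mem_nbhd, hTdef, Finset.mem_image,
        SimpleGraph.mem_neighborFinset]
      constructor
      · rintro ⟨a, ha, hadj, hvI⟩
        exact ⟨⟨a.1, ⟨a, ha, rfl⟩, hadj⟩, hvI⟩
      · rintro ⟨⟨u, ⟨a, ha, rfl⟩, hadj⟩, hvI⟩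
        exact ⟨a, ha, hadj, hvI⟩
    rw [hbiU]
    -- criticality gives Hall's condition
    have hI'indep : Indep G (I \ nbhd G T) := indep_subset G hIndepI (Finset.sdiff_subset)
    have h1 : diffI G (I \ nbhd G T) ≤ diffI G I := hcritI _ hI'indep
    have h2 : nbhd G (I \ nbhd G T) ⊆ nbhd G I \ T := by
      intro x hx
      rw [mem_nbhd] at hx
      obtain ⟨u, hu, ha⟩ := hx
      rw [Finset.mem_sdiff] at hu
      rw [Finset.mem_sdiff]
      refine ⟨nbhd_mono G Finset.sdiff_subset (by rw [mem_nbhd]; exact ⟨u, Finset.mem_sdiff.mpr hu, ha⟩), ?_⟩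
      intro hxT
      exact hu.2 (by rw [mem_nbhd]; exact ⟨x, hxT, ha.symm⟩)
    have a1 : (I ∩ nbhd G T).card + (I \ nbhd G T).card = I.card :=
      Finset.card_inter_add_card_sdiff _ _
    have a2 : (nbhd G (I \ nbhd G T)).card ≤ (nbhd G I \ T).card := Finset.card_le_card h2
    have a3 : (nbhd G I \ T).card = (nbhd G I).card - T.card := Finset.card_sdiff_of_subset hTsub
    have a3' : T.card ≤ (nbhd G I).card := Finset.card_le_card hTsub
    have a5 : (nbhd G T ∩ I).card = (I ∩ nbhd G T).card := by rw [Finset.inter_comm]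
    simp only [diffI] at h1
    omega
  set f : V → V := fun v => if h : v ∈ nbhd G I then F ⟨v, h⟩ else v with hfdef
  have hf1 : ∀ t, (ht : t ∈ nbhd G I) → f t ∈ I ∧ G.Adj t (f t) := by
    intro t ht
    have := hFmem ⟨t, ht⟩
    rw [Finset.mem_inter, SimpleGraph.mem_neighborFinset] at this
    rw [hfdef]
    simp only [dif_pos ht]
    exact ⟨this.2, this.1⟩
  have hf2 : ∀ t₁, t₁ ∈ nbhd G I → ∀ t₂, t₂ ∈ nbhd G I → f t₁ = f t₂ → t₁ = t₂ := by
    intro t₁ h₁ t₂ h₂ heq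
    rw [hfdef] at heq
    simp only [dif_pos h₁, dif_pos h₂] at heq
    have := hFinj heq
    exact congrArg Subtype.val this
  -- a helper: splitting a subset of L
  have hsplit : ∀ Y : Finset V, Y ⊆ L → (Y ∩ I).card + (Y ∩ nbhd G I).card = Y.card := by
    intro Y hY
    rw [← Finset.card_union_of_disjoint (hdisjIN.mono Finset.inter_subset_right Finset.inter_subset_right)]
    congr 1
    ext x
    simp only [Finset.mem_union, Finset.mem_inter]
    constructor
    · rintro (⟨h1, _⟩ | ⟨h1, _⟩) <;> exact h1
    · intro hx
      rcases Finset.mem_union.mp (hY hx) with h | h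
      exacts [Or.inl ⟨hx, h⟩, Or.inr ⟨hx, h⟩]
  have himgsub : ∀ Y : Finset V, Indep G Y → (Y ∩ nbhd G I).image f ⊆ I \ Y := by
    intro Y hYind x hx
    rw [Finset.mem_image] at hx
    obtain ⟨t, ht, rfl⟩ := hx
    rw [Finset.mem_inter] at ht
    obtain ⟨hf1a, hf1b⟩ := hf1 t ht.2
    rw [Finset.mem_sdiff]
    refine ⟨hf1a, fun hmem => hYind t ht.1 (f t) hmem hf1b⟩
  have himgcard : ∀ Y : Finset V, ((Y ∩ nbhd G I).image f).card = (Y ∩ nbhd G I).card := by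
    intro Y
    apply Finset.card_image_of_injOn
    intro t₁ h₁ t₂ h₂ heq
    exact hf2 t₁ (Finset.mem_inter.mp h₁).2 t₂ (Finset.mem_inter.mp h₂).2 heq
  -- Part 1 : every independent subset of L has cardinality at most |I|
  have P1 : ∀ J : Finset V, Indep G J → J ⊆ L → J.card ≤ I.card := by
    intro J hJind hJL
    have h1 := Finset.card_le_card (himgsub J hJind)
    rw [himgcard J] at h1
    have h2 : (I ∩ J).card + (I \ J).card = I.card := Finset.card_inter_add_card_sdiff _ _
    have h3 := hsplit J hJL
    have h4 : (J ∩ I).card = (I ∩ J).card := by rw [Finset.inter_comm]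
    omega
  -- Part 2 : in any maximum independent set T of G[L], if t ∈ N(I) is not in T
  -- then its matching partner f t is in T
  have P2 : ∀ T : Finset V, Indep G T → T ⊆ L → T.card = I.card →
      ∀ t ∈ nbhd G I, t ∉ T → f t ∈ T := by
    intro T hTind hTL hTcard t ht htT
    by_contra hftT
    have h1 := Finset.card_le_card (himgsub T hTind)
    rw [himgcard T] at h1
    have h2 : (I ∩ T).card + (I \ T).card = I.card := Finset.card_inter_add_card_sdiff _ _
    have h3 := hsplit T hTL
    have h4 : (T ∩ I).card = (I ∩ T).card := by rw [Finset.inter_comm]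
    have heq : (T ∩ nbhd G I).image f = I \ T := by
      apply Finset.eq_of_subset_of_card_le (himgsub T hTind)
      rw [himgcard T]
      omega
    have hft : f t ∈ I \ T := Finset.mem_sdiff.mpr ⟨(hf1 t ht).1, hftT⟩
    rw [← heq, Finset.mem_image] at hft
    obtain ⟨t', ht', hfeq⟩ := hft
    rw [Finset.mem_inter] at ht'
    have := hf2 t' ht'.2 t ht hfeq
    exact htT (this ▸ ht'.1)
  -- Part 7 : for independent Y ⊆ L, |Y| - |N(Y) ∩ L| ≤ d
  have P7 : ∀ Y : Finset V, Indep G Y → Y ⊆ L →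
      (Y.card : ℤ) - ((nbhd G Y ∩ L).card : ℤ) ≤ diffI G I := by
    intro Y hYind hYL
    have hB1 : (Y ∩ nbhd G I).image f ⊆ nbhd G Y ∩ L := by
      intro x hx
      rw [Finset.mem_image] at hx
      obtain ⟨t, ht, rfl⟩ := hx
      rw [Finset.mem_inter] at ht
      obtain ⟨hf1a, hf1b⟩ := hf1 t ht.2
      exact Finset.mem_inter.mpr ⟨by rw [mem_nbhd]; exact ⟨t, ht.1, hf1b⟩, hIL hf1a⟩
    have hB1I : (Y ∩ nbhd G I).image f ⊆ I := by
      intro x hx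
      rw [Finset.mem_image] at hx
      obtain ⟨t, ht, rfl⟩ := hx
      exact (hf1 t (Finset.mem_inter.mp ht).2).1
    have hB2 : nbhd G (Y ∩ I) ⊆ nbhd G Y ∩ L := by
      intro x hx
      exact Finset.mem_inter.mpr ⟨nbhd_mono G Finset.inter_subset_left hx,
        hNL (nbhd_mono G Finset.inter_subset_right hx)⟩
    have hdisj : Disjoint ((Y ∩ nbhd G I).image f) (nbhd G (Y ∩ I)) :=
      hdisjIN.mono hB1I (nbhd_mono G Finset.inter_subset_right)
    have hcup : ((Y ∩ nbhd G I).image f) ∪ nbhd G (Y ∩ I) ⊆ nbhd G Y ∩ L :=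
      Finset.union_subset hB1 hB2
    have hcard1 : ((Y ∩ nbhd G I).image f).card + (nbhd G (Y ∩ I)).card ≤ (nbhd G Y ∩ L).card := by
      rw [← Finset.card_union_of_disjoint hdisj]
      exact Finset.card_le_card hcup
    rw [himgcard Y] at hcard1
    have hsplitY := hsplit Y hYL
    have hYI : diffI G (Y ∩ I) ≤ diffI G I :=
      hcritI _ (indep_subset G hYind Finset.inter_subset_left)
    simp only [diffI] at hYI ⊢
    omega
  have hdvalI : diffI G I = (I.card : ℤ) - ((nbhd G I).card : ℤ) := rfl
  -- Part 8 : every maximum critical independent set is contained in L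
  have P8 : ∀ J : Finset V, IsMaxCritIndep G J → J ⊆ L := by
    intro J hJ
    by_contra hns
    set J0 : Finset V := J \ L with hJ0def
    have hJ0ne : J0.Nonempty := by
      obtain ⟨x, hxJ, hxL⟩ := Finset.not_subset.mp hns
      exact ⟨x, Finset.mem_sdiff.mpr ⟨hxJ, hxL⟩⟩
    have hIndepJ : Indep G J := hJ.1.1
    have hdJ : diffI G J = diffI G I := le_antisymm (hcritI J hIndepJ) (hJ.1.2 I hIndepI)
    have hJ0L : ∀ x ∈ J0, x ∉ L := fun x hx => (Finset.mem_sdiff.mp hx).2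
    have hIJ0indep : Indep G (I ∪ J0) := by
      intro u hu v hv hadj
      rcases Finset.mem_union.mp hu with hu' | hu' <;> rcases Finset.mem_union.mp hv with hv' | hv'
      · exact hIndepI u hu' v hv' hadj
      · exact hJ0L v hv' (hNL (by rw [mem_nbhd]; exact ⟨u, hu', hadj⟩))
      · exact hJ0L u hu' (hNL (by rw [mem_nbhd]; exact ⟨v, hv', hadj.symm⟩))
      · exact hIndepJ u (Finset.sdiff_subset hu') v (Finset.sdiff_subset hv') hadj
    have hdisjIJ0 : Disjoint I J0 :=
      Finset.disjoint_left.mpr (fun {x} hx hx0 => hJ0L x hx0 (hIL hx))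
    have hcardIJ0 : (I ∪ J0).card = I.card + J0.card := Finset.card_union_of_disjoint hdisjIJ0
    have hle : diffI G (I ∪ J0) ≤ diffI G I - 1 := by
      rcases lt_or_eq_of_le (hcritI _ hIJ0indep) with h | h
      · omega
      · exfalso
        have hcrit : IsCritIndep G (I ∪ J0) := ⟨hIJ0indep, fun J' h' => (hcritI J' h').trans_eq h.symm⟩
        have := hI.2 _ hcrit
        have := Finset.card_pos.mpr hJ0ne
        omega
    have hnbhdu : nbhd G (I ∪ J0) = nbhd G I ∪ nbhd G J0 := nbhd_union G I J0
    have hucard : (nbhd G I ∪ nbhd G J0).card = (nbhd G I).card + (nbhd G J0 \ nbhd G I).card := by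
      rw [← Finset.union_sdiff_self_eq_union]
      exact Finset.card_union_of_disjoint Finset.disjoint_sdiff
    have hNsub : nbhd G J0 \ nbhd G I ⊆ nbhd G J \ L := by
      intro x hx
      rw [Finset.mem_sdiff] at hx
      obtain ⟨hx1, hx2⟩ := hx
      rw [Finset.mem_sdiff]
      refine ⟨nbhd_mono G Finset.sdiff_subset hx1, ?_⟩
      intro hxL
      rcases Finset.mem_union.mp hxL with hxI | hxN
      · rw [mem_nbhd] at hx1
        obtain ⟨u, hu, ha⟩ := hx1
        exact hJ0L u hu (hNL (by rw [mem_nbhd]; exact ⟨x, hxI, ha.symm⟩))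
      · exact hx2 hxN
    have hb2 : (nbhd G J0 \ nbhd G I).card ≤ (nbhd G J \ L).card := Finset.card_le_card hNsub
    have hc2 : (J ∩ L).card + J0.card = J.card := Finset.card_inter_add_card_sdiff _ _
    have hc3 : (nbhd G J ∩ L).card + (nbhd G J \ L).card = (nbhd G J).card :=
      Finset.card_inter_add_card_sdiff _ _
    have hc4 : (nbhd G (J ∩ L) ∩ L).card ≤ (nbhd G J ∩ L).card :=
      Finset.card_le_card (Finset.inter_subset_inter_right (nbhd_mono G Finset.inter_subset_left))
    have hP7J := P7 (J ∩ L) (indep_subset G hIndepJ Finset.inter_subset_left) Finset.inter_subset_right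
    simp only [diffI] at hle hdJ hP7J ⊢
    rw [hnbhdu] at hle
    omega
  -- cardinality of maxcrit sets
  have Pcard : ∀ J : Finset V, IsMaxCritIndep G J → J.card = I.card := by
    intro J hJ
    exact le_antisymm (hI.2 J hJ.1) (hJ.2 I hI.1)
  -- Part 9 : neighborhoods of maxcrit sets are inside L
  have P9 : ∀ J : Finset V, IsMaxCritIndep G J → nbhd G J ⊆ L := by
    intro J hJ
    have hJL := P8 J hJ
    have hJcard := Pcard J hJ
    have hIndepJ : Indep G J := hJ.1.1
    have hdJ : diffI G J = diffI G I := le_antisymm (hcritI J hIndepJ) (hJ.1.2 I hIndepI)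
    have hLJ : L \ J ⊆ nbhd G J ∩ L := by
      intro x hx
      rw [Finset.mem_sdiff] at hx
      refine Finset.mem_inter.mpr ⟨?_, hx.1⟩
      by_contra hxN
      have hins : Indep G (insert x J) := by
        intro u hu v hv hadj
        rcases Finset.mem_insert.mp hu with rfl | hu' <;> rcases Finset.mem_insert.mp hv with rfl | hv'
        · exact G.irrefl hadj
        · exact hxN (by rw [mem_nbhd]; exact ⟨v, hv', hadj.symm⟩)
        · exact hxN (by rw [mem_nbhd]; exact ⟨u, hu', hadj⟩)
        · exact hIndepJ u hu' v hv' hadj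
      have hsub : insert x J ⊆ L := Finset.insert_subset hx.1 hJL
      have := P1 _ hins hsub
      rw [Finset.card_insert_of_notMem hx.2] at this
      omega
    have hcardLJ : (L \ J).card = L.card - J.card := Finset.card_sdiff_of_subset hJL
    have hcardle : J.card ≤ L.card := Finset.card_le_card hJL
    have hlb := Finset.card_le_card hLJ
    have hc3 : (nbhd G J ∩ L).card + (nbhd G J \ L).card = (nbhd G J).card :=
      Finset.card_inter_add_card_sdiff _ _
    have hzero : (nbhd G J \ L).card = 0 := by
      simp only [diffI] at hdJ
      omega
    rw [← Finset.sdiff_eq_empty_iff_subset]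
    exact Finset.card_eq_zero.mp hzero
  -- converse characterization
  have Pconv : ∀ J : Finset V, J ⊆ L → Indep G J → J.card = I.card → nbhd G J ⊆ L →
      IsMaxCritIndep G J := by
    intro J hJL hIndepJ hJcard hJN
    have hNJJ : nbhd G J ⊆ L \ J := by
      intro x hx
      refine Finset.mem_sdiff.mpr ⟨hJN hx, ?_⟩
      intro hxJ
      rw [mem_nbhd] at hx
      obtain ⟨u, hu, ha⟩ := hx
      exact hIndepJ u hu x hxJ ha
    have h1 : (nbhd G J).card ≤ L.card - J.card := by
      have := Finset.card_le_card hNJJ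
      rw [Finset.card_sdiff_of_subset hJL] at this
      exact this
    have hcardle : J.card ≤ L.card := Finset.card_le_card hJL
    have hge : diffI G I ≤ diffI G J := by
      simp only [diffI]
      omega
    refine ⟨⟨hIndepJ, fun J' h' => (hcritI J' h').trans hge⟩,
      fun J' hJ' => (hI.2 J' hJ').trans_eq hJcard.symm⟩
  -- a maximum independent set of G[Lc]
  obtain ⟨B0, hB0mem, hB0max⟩ := Finset.exists_max_image
      ((univ \ L).powerset.filter (fun S => Indep G S)) Finset.card
      ⟨∅, Finset.mem_filter.mpr ⟨Finset.mem_powerset.mpr (Finset.empty_subset _),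
        fun u hu => absurd hu (Finset.notMem_empty u)⟩⟩
  have hB0 : IsMaxIndepOn G (univ \ L) B0 := by
    obtain ⟨h1, h2⟩ := Finset.mem_filter.mp hB0mem
    exact ⟨Finset.mem_powerset.mp h1, h2,
      fun T hT hTi => hB0max T (Finset.mem_filter.mpr ⟨Finset.mem_powerset.mpr hT, hTi⟩)⟩
  -- extension of a maxcrit set by a maximum independent set of G[Lc]
  have Pext : ∀ J : Finset V, IsMaxCritIndep G J → ∀ B : Finset V,
      IsMaxIndepOn G (univ \ L) B → IsMaxIndep G (J ∪ B) := by
    intro J hJ B hB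
    have hJL := P8 J hJ
    have hJN := P9 J hJ
    have hJcard := Pcard J hJ
    have hBLc : ∀ x ∈ B, x ∉ L := fun x hx => (Finset.mem_sdiff.mp (hB.1 hx)).2
    have hind : Indep G (J ∪ B) := by
      intro u hu v hv hadj
      rcases Finset.mem_union.mp hu with hu' | hu' <;> rcases Finset.mem_union.mp hv with hv' | hv'
      · exact hJ.1.1 u hu' v hv' hadj
      · exact hBLc v hv' (hJN (by rw [mem_nbhd]; exact ⟨u, hu', hadj⟩))
      · exact hBLc u hu' (hJN (by rw [mem_nbhd]; exact ⟨v, hv', hadj.symm⟩))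
      · exact hB.2.1 u hu' v hv' hadj
    have hdisjJB : Disjoint J B :=
      Finset.disjoint_left.mpr (fun {x} hx hxB => hBLc x hxB (hJL hx))
    have hcardJB : (J ∪ B).card = I.card + B.card := by
      rw [Finset.card_union_of_disjoint hdisjJB, hJcard]
    refine ⟨hind, fun T hT => ?_⟩
    have h1 : (T ∩ L).card ≤ I.card := P1 _ (indep_subset G hT Finset.inter_subset_left)
      Finset.inter_subset_right
    have h2 : (T \ L).card ≤ B.card := hB.2.2 _ (fun x hx =>
        Finset.mem_sdiff.mpr ⟨Finset.mem_univ x, (Finset.mem_sdiff.mp hx).2⟩)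
      (indep_subset G hT Finset.sdiff_subset)
    have h3 : (T ∩ L).card + (T \ L).card = T.card := Finset.card_inter_add_card_sdiff _ _
    omega
  -- every maximum independent set splits properly
  have PmisL : ∀ S : Finset V, IsMaxIndep G S →
      (S ∩ L).card = I.card ∧ IsMaxIndepOn G (univ \ L) (S \ L) := by
    intro S hS
    have h1 : (S ∩ L).card ≤ I.card := P1 _ (indep_subset G hS.1 Finset.inter_subset_left)
      Finset.inter_subset_right
    have hSLc : S \ L ⊆ univ \ L := fun x hx =>
      Finset.mem_sdiff.mpr ⟨Finset.mem_univ x, (Finset.mem_sdiff.mp hx).2⟩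
    have h2 : (S \ L).card ≤ B0.card := hB0.2.2 _ hSLc (indep_subset G hS.1 Finset.sdiff_subset)
    have h3 : (S ∩ L).card + (S \ L).card = S.card := Finset.card_inter_add_card_sdiff _ _
    have hIB0 := Pext I hI B0 hB0
    have h4 : I.card + B0.card ≤ S.card := by
      have := hS.2 (I ∪ B0) hIB0.1
      have hdisj : Disjoint I B0 := Finset.disjoint_left.mpr (fun {x} hx hxB =>
        (Finset.mem_sdiff.mp (hB0.1 hxB)).2 (hIL hx))
      rw [Finset.card_union_of_disjoint hdisj] at this
      omega
    refine ⟨by omega, hSLc, indep_subset G hS.1 Finset.sdiff_subset,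
      fun T hT hTi => (hB0.2.2 T hT hTi).trans (by omega)⟩
  -- ============ final assembly ============
  constructor
  · intro hcn
    constructor
    · -- coreOn (G[Lc]) = ∅
      rw [Set.eq_empty_iff_forall_notMem]
      intro v hv
      have hv' : ∀ S : Finset V, IsMaxIndepOn G (univ \ L) S → v ∈ S := hv
      have hvB0 : v ∈ B0 := hv' B0 hB0
      have hvLc : v ∉ L := (Finset.mem_sdiff.mp (hB0.1 hvB0)).2
      have hvcore : v ∈ core G := by
        intro S hS
        have hvS : v ∈ S \ L := hv' _ (PmisL S hS).2
        exact Finset.sdiff_subset hvS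
      rw [hcn] at hvcore
      have : v ∈ I := hvcore I hI
      exact hvLc (hIL this)
    · -- corona ∩ ∂L = ∅
      rw [Set.eq_empty_iff_forall_notMem]
      rintro v ⟨⟨S, hS, hvS⟩, hvL, w, hwL, hvw⟩
      have hvN : v ∈ nbhd G I := by
        rcases Finset.mem_union.mp hvL with h | h
        · exact absurd (hNL (by rw [mem_nbhd]; exact ⟨v, h, hvw⟩)) hwL
        · exact h
      have hy : f v ∈ nucleus G := by
        intro J hJ
        have hvJ : v ∉ J := by
          intro hvJ
          exact hwL (P9 J hJ (by rw [mem_nbhd]; exact ⟨v, hvJ, hvw⟩))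
        exact P2 J hJ.1.1 (P8 J hJ) (Pcard J hJ) v hvN hvJ
      rw [← hcn] at hy
      have hyS : f v ∈ S := hy S hS
      exact hS.1 v hvS (f v) hyS (hf1 v hvN).2
  · rintro ⟨hcore0, hbd0⟩
    apply Set.eq_of_subset_of_subset
    · -- core ⊆ nucleus
      intro v hvcore J hJ
      have hnot : v ∉ coreOn G (univ \ L) := by
        rw [hcore0]; exact Set.notMem_empty v
      have hnot' : ¬ ∀ S : Finset V, IsMaxIndepOn G (univ \ L) S → v ∈ S := hnot
      push_neg at hnot'
      obtain ⟨B, hB, hvB⟩ := hnot'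
      have hSmax := Pext J hJ B hB
      have hvJB : v ∈ J ∪ B := hvcore _ hSmax
      rcases Finset.mem_union.mp hvJB with h | h
      exacts [h, absurd h hvB]
    · -- nucleus ⊆ core
      intro v hvnuc S hS
      have hTcard := (PmisL S hS).1
      have hTN : nbhd G (S ∩ L) ⊆ L := by
        intro x hx
        by_contra hxL
        rw [mem_nbhd] at hx
        obtain ⟨u, hu, ha⟩ := hx
        rw [Finset.mem_inter] at hu
        have hmem : u ∈ corona G ∩ boundaryL G L := ⟨⟨S, hS, hu.1⟩, hu.2, x, hxL, ha⟩
        rw [hbd0] at hmem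
        exact hmem
      have hT := Pconv (S ∩ L) Finset.inter_subset_right
        (indep_subset G hS.1 Finset.inter_subset_left) hTcard hTN
      exact Finset.inter_subset_left (hvnuc _ hT)
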